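/- Let a = 2π/(ln 2 − γ), where γ is the Euler–Mascheroni constant, let θ₀ = 0 and c = 0. Consider the equation ln(1+λ)/(4π) = 1/a + 1/(ε²·ln λ/(4π) − a − ε²/a) for λ > 0. Then there exists ε₀ > 0 such that for all 0 < ε < ε₀ the equation has exactly two solutions: one lies in (exp(4π(a/ε² + 1/a)), ∞), and the other, λ_ε, lies in (0, exp(4π/a)) and satisfies λ_ε = (2/a²)·ε²·|ln ε| + o(ε²·|ln ε|) as ε → 0. -/

import Mathlib

open Real Filter Set Topology

noncomputable section TwoEigAux

/-- The eigenvalue equation. -/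
def EqE (a ε lam : ℝ) : Prop :=
  Real.log (1 + lam) / (4 * Real.pi) =
    1 / a + 1 / (ε ^ 2 * Real.log lam / (4 * Real.pi) - a - ε ^ 2 / a)

def Pf (a x : ℝ) : ℝ := 1 / a - Real.log (1 + x) / (4 * Real.pi)

def Qf (a ε x : ℝ) : ℝ := a + ε ^ 2 / a - ε ^ 2 * Real.log x / (4 * Real.pi)

/-- the zero of `Pf`. -/
def lamS (a : ℝ) : ℝ := Real.exp (4 * Real.pi / a) - 1

/-- the zero of `Qf`. -/
def lamZ (a ε : ℝ) : ℝ := Real.exp (4 * Real.pi * (a / ε ^ 2 + 1 / a))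

def SmallSet (a ε : ℝ) : Set ℝ :=
  {x | 0 < x ∧ x < Real.exp (4 * Real.pi / a) ∧ EqE a ε x}

open scoped Classical in
def Lam (a ε : ℝ) : ℝ := if h : ∃ x, x ∈ SmallSet a ε then h.choose else 1

lemma a_pos (a : ℝ)
    (ha : a = 2 * Real.pi / (Real.log 2 - Real.eulerMascheroniConstant)) : 0 < a := by
  have h1 : Real.eulerMascheroniConstant < 2 / 3 := Real.eulerMascheroniConstant_lt_two_thirds
  have h2 : (0.6931471803 : ℝ) < Real.log 2 := Real.log_two_gt_d9
  have h3 : 0 < Real.log 2 - Real.eulerMascheroniConstant := by linarith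
  rw [ha]
  positivity

lemma eq_iff (a ε lam : ℝ) (ha : a ≠ 0) (hQ : Qf a ε lam ≠ 0) :
    EqE a ε lam ↔ Pf a lam * Qf a ε lam = 1 := by
  have hX : ε ^ 2 * Real.log lam / (4 * Real.pi) - a - ε ^ 2 / a = -Qf a ε lam := by
    unfold Qf; ring
  unfold EqE Pf
  rw [hX]
  set q := Qf a ε lam with hq
  set f := Real.log (1 + lam) with hf
  constructor
  · intro h
    rw [h]
    field_simp
    ring
  · intro h
    have h2 : 1 / a - f / (4 * Real.pi) = 1 / q := by
      rw [eq_div_iff hQ]; exact h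
    have h3 : f / (4 * Real.pi) = 1 / a - 1 / q := by linarith
    rw [h3, one_div_neg_eq_neg_one_div]
    ring

lemma Pf_lt (a : ℝ) {x y : ℝ} (hx : -1 < x) (hxy : x < y) : Pf a y < Pf a x := by
  have h := Real.log_lt_log (by linarith : (0:ℝ) < 1 + x) (by linarith : 1 + x < 1 + y)
  have hπ : (0:ℝ) < 4 * Real.pi := by positivity
  have h2 : Real.log (1 + x) / (4 * Real.pi) < Real.log (1 + y) / (4 * Real.pi) := by gcongr
  unfold Pf; linarith

lemma Qf_lt (a : ℝ) {ε x y : ℝ} (hε : ε ≠ 0) (hx : 0 < x) (hxy : x < y) :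
    Qf a ε y < Qf a ε x := by
  have h := Real.log_lt_log hx hxy
  have hε2 : 0 < ε ^ 2 := by positivity
  have hπ : (0:ℝ) < 4 * Real.pi := by positivity
  have h2 : ε ^ 2 * Real.log x / (4 * Real.pi) < ε ^ 2 * Real.log y / (4 * Real.pi) := by gcongr
  unfold Qf; linarith

lemma Pf_zero (a : ℝ) (ha : 0 < a) : Pf a (lamS a) = 0 := by
  unfold Pf lamS
  rw [show (1 : ℝ) + (Real.exp (4 * Real.pi / a) - 1) = Real.exp (4 * Real.pi / a) by ring,
    Real.log_exp]
  field_simp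
  ring

lemma lamS_pos (a : ℝ) (ha : 0 < a) : 0 < lamS a := by
  have hπ := Real.pi_pos
  have : (1:ℝ) < Real.exp (4 * Real.pi / a) := by
    rw [show (1:ℝ) = Real.exp 0 by simp]
    exact Real.exp_lt_exp.mpr (by positivity)
  unfold lamS; linarith

lemma Qf_zero (a ε : ℝ) (ha : 0 < a) (hε : ε ≠ 0) : Qf a ε (lamZ a ε) = 0 := by
  unfold Qf lamZ
  rw [Real.log_exp]
  field_simp
  ring

lemma lamS_lt_lamZ (a ε : ℝ) (ha : 0 < a) (hε : ε ≠ 0) : lamS a < lamZ a ε := by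
  have hπ := Real.pi_pos
  have hε2 : 0 < ε ^ 2 := by positivity
  have h : 4 * Real.pi / a ≤ 4 * Real.pi * (a / ε ^ 2 + 1 / a) := by
    have h1 : 0 < a / ε ^ 2 := by positivity
    rw [show 4 * Real.pi / a = 4 * Real.pi * (1 / a) by ring]
    gcongr
    linarith
  have : Real.exp (4 * Real.pi / a) ≤ Real.exp (4 * Real.pi * (a / ε ^ 2 + 1 / a)) :=
    Real.exp_le_exp.mpr h
  unfold lamS lamZ; linarith

lemma Pf_pos (a : ℝ) (ha : 0 < a) {x : ℝ} (hx : -1 < x) (hxS : x < lamS a) : 0 < Pf a x := by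
  have := Pf_lt a hx hxS
  rw [Pf_zero a ha] at this
  linarith

lemma Pf_neg (a : ℝ) (ha : 0 < a) {x : ℝ} (hxS : lamS a < x) : Pf a x < 0 := by
  have := Pf_lt a (by linarith [lamS_pos a ha]) hxS
  rw [Pf_zero a ha] at this
  linarith

lemma Qf_pos (a ε : ℝ) (ha : 0 < a) (hε : ε ≠ 0) {x : ℝ} (hx : 0 < x)
    (hxZ : x < lamZ a ε) : 0 < Qf a ε x := by
  have := Qf_lt a hε hx hxZ
  rw [Qf_zero a ε ha hε] at this
  linarith

lemma Qf_neg (a ε : ℝ) (ha : 0 < a) (hε : ε ≠ 0) {x : ℝ} (hxZ : lamZ a ε < x) :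
    Qf a ε x < 0 := by
  have h0 : (0:ℝ) < lamZ a ε := Real.exp_pos _
  have := Qf_lt a hε h0 hxZ
  rw [Qf_zero a ε ha hε] at this
  linarith

lemma hf_anti (a ε : ℝ) (ha : 0 < a) (hε : ε ≠ 0) {x y : ℝ} (hx : 0 < x) (hxy : x < y)
    (hy : y < lamS a) : Pf a y * Qf a ε y < Pf a x * Qf a ε x := by
  have hPy : 0 < Pf a y := Pf_pos a ha (by linarith) hy
  have hQy : 0 < Qf a ε y := Qf_pos a ε ha hε (by linarith) (hy.trans (lamS_lt_lamZ a ε ha hε))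
  have hP : Pf a y < Pf a x := Pf_lt a (by linarith) hxy
  have hQ : Qf a ε y < Qf a ε x := Qf_lt a hε hx hxy
  exact mul_lt_mul hP hQ.le hQy (by linarith)

lemma hf_mono (a ε : ℝ) (ha : 0 < a) (hε : ε ≠ 0) {x y : ℝ} (hx : lamZ a ε < x)
    (hxy : x < y) : Pf a x * Qf a ε x < Pf a y * Qf a ε y := by
  have hZ : 0 < lamZ a ε := Real.exp_pos _
  have hS := lamS_lt_lamZ a ε ha hε
  have hPx : Pf a x < 0 := Pf_neg a ha (by linarith)
  have hQx : Qf a ε x < 0 := Qf_neg a ε ha hε hx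
  have hP : Pf a y < Pf a x := Pf_lt a (by linarith [lamS_pos a ha]) hxy
  have hQ : Qf a ε y < Qf a ε x := Qf_lt a hε (by linarith) hxy
  have h := mul_lt_mul (by linarith : -Pf a x < -Pf a y) (by linarith : -Qf a ε x ≤ -Qf a ε y)
    (by linarith) (by linarith)
  nlinarith [h]

lemma hf_cont (a ε : ℝ) : ContinuousOn (fun x => Pf a x * Qf a ε x) (Ioi (0:ℝ)) := by
  apply ContinuousOn.mul
  · unfold Pf
    refine continuousOn_const.sub (ContinuousOn.div_const ?_ _)
    refine Real.continuousOn_log.comp (by fun_prop) ?_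
    intro x hx
    simp only [mem_compl_iff, mem_singleton_iff]
    have hx' : (0:ℝ) < x := hx
    intro h
    nlinarith
  · unfold Qf
    refine continuousOn_const.sub (ContinuousOn.div_const ?_ _)
    refine continuousOn_const.mul (Real.continuousOn_log.mono ?_)
    intro x hx
    simp only [mem_compl_iff, mem_singleton_iff]
    exact ne_of_gt hx

lemma tendsto_h (a c : ℝ) (ha : 0 < a) (hc : 0 < c) :
    Tendsto (fun ε : ℝ =>
        (Pf a (c * ε ^ 2 * (-Real.log ε)) * Qf a ε (c * ε ^ 2 * (-Real.log ε)) - 1)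
          / (ε ^ 2 * (-Real.log ε)))
      (𝓝[>] 0) (𝓝 (a / (4 * Real.pi) * (2 / a ^ 2 - c))) := by
  have hπ : (0:ℝ) < Real.pi := Real.pi_pos
  have hmem : Ioo (0:ℝ) 1 ∈ 𝓝[>] (0:ℝ) := Ioo_mem_nhdsGT_of_mem (left_mem_Ico.mpr one_pos)
  have hε0 : Tendsto (fun ε : ℝ => ε) (𝓝[>] (0:ℝ)) (𝓝 0) :=
    tendsto_id.mono_left nhdsWithin_le_nhds
  have hL : Tendsto (fun ε : ℝ => -Real.log ε) (𝓝[>] (0:ℝ)) atTop :=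
    tendsto_neg_atBot_atTop.comp Real.tendsto_log_nhdsGT_zero
  have hεlog : Tendsto (fun ε : ℝ => Real.log ε * ε) (𝓝[>] (0:ℝ)) (𝓝 0) := by
    have := tendsto_log_mul_rpow_nhdsGT_zero one_pos
    simpa using this
  have hεL : Tendsto (fun ε : ℝ => ε ^ 2 * (-Real.log ε)) (𝓝[>] (0:ℝ)) (𝓝 0) := by
    have h := hε0.mul hεlog.neg
    rw [show (0:ℝ) * -0 = 0 by ring] at h
    exact h.congr fun ε => by ring
  have hx0 : Tendsto (fun ε : ℝ => c * ε ^ 2 * (-Real.log ε)) (𝓝[>] (0:ℝ)) (𝓝 0) := by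
    have h := hεL.const_mul c
    rw [mul_zero] at h
    exact h.congr fun ε => by ring
  have hxpos : ∀ᶠ ε in 𝓝[>] (0:ℝ), 0 < c * ε ^ 2 * (-Real.log ε) := by
    filter_upwards [hmem] with ε hε
    have h3 := Real.log_neg hε.1 hε.2
    have h2 : 0 < ε ^ 2 := pow_pos hε.1 2
    exact mul_pos (mul_pos hc h2) (by linarith)
  have hxne : Tendsto (fun ε : ℝ => c * ε ^ 2 * (-Real.log ε)) (𝓝[>] (0:ℝ)) (𝓝[≠] 0) := by
    refine tendsto_nhdsWithin_of_tendsto_nhds_of_eventually_within _ hx0 ?_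
    filter_upwards [hxpos] with ε hε
    simp only [mem_compl_iff, mem_singleton_iff]
    exact ne_of_gt hε
  have hslope : Tendsto (fun y : ℝ => Real.log (1 + y) / y) (𝓝[≠] (0:ℝ)) (𝓝 1) := by
    have h2 : HasDerivAt (fun y : ℝ => 1 + y) 1 0 := by
      simpa using (hasDerivAt_id (0:ℝ)).const_add 1
    have h1 : HasDerivAt (fun y : ℝ => Real.log (1 + y)) 1 0 := by
      simpa using h2.log (by norm_num)
    have h3 := hasDerivAt_iff_tendsto_slope.mp h1
    refine h3.congr fun y => ?_
    rw [slope_def_field]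
    simp
  have hratio : Tendsto
      (fun ε : ℝ => Real.log (1 + c * ε ^ 2 * (-Real.log ε)) / (c * ε ^ 2 * (-Real.log ε)))
      (𝓝[>] (0:ℝ)) (𝓝 1) := hslope.comp hxne
  have hlog1x : Tendsto (fun ε : ℝ => Real.log (1 + c * ε ^ 2 * (-Real.log ε)))
      (𝓝[>] (0:ℝ)) (𝓝 0) := by
    have h1 : Tendsto (fun ε : ℝ => 1 + c * ε ^ 2 * (-Real.log ε)) (𝓝[>] (0:ℝ)) (𝓝 1) := by
      have h := hx0.const_add (1:ℝ)
      rwa [add_zero] at h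
    have h2 : ContinuousAt Real.log 1 := Real.continuousAt_log one_ne_zero
    have := h2.tendsto.comp h1
    rwa [Real.log_one] at this
  have hlogL : Tendsto (fun ε : ℝ => Real.log (-Real.log ε) / (-Real.log ε))
      (𝓝[>] (0:ℝ)) (𝓝 0) := by
    have h1 := Real.isLittleO_log_id_atTop.tendsto_div_nhds_zero
    have h2 := h1.comp hL
    simpa [Function.comp_def] using h2
  have hinvL : Tendsto (fun ε : ℝ => (-Real.log ε)⁻¹) (𝓝[>] (0:ℝ)) (𝓝 0) :=
    tendsto_inv_atTop_zero.comp hL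
  -- T1 : the limit of (Qf - a)/(ε² L)
  have hT1 : Tendsto
      (fun ε : ℝ => (Qf a ε (c * ε ^ 2 * (-Real.log ε)) - a) / (ε ^ 2 * (-Real.log ε)))
      (𝓝[>] (0:ℝ)) (𝓝 (1 / (2 * Real.pi))) := by
    have hmain : Tendsto
        (fun ε : ℝ => (1 / a - Real.log c / (4 * Real.pi)) * (-Real.log ε)⁻¹
          + 1 / (2 * Real.pi) - Real.log (-Real.log ε) / (-Real.log ε) / (4 * Real.pi))
        (𝓝[>] (0:ℝ))
        (𝓝 ((1 / a - Real.log c / (4 * Real.pi)) * 0 + 1 / (2 * Real.pi) - 0 / (4 * Real.pi))) :=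
      (((hinvL.const_mul _).add_const _).sub (hlogL.div_const _))
    rw [show (1 / a - Real.log c / (4 * Real.pi)) * 0 + 1 / (2 * Real.pi) - 0 / (4 * Real.pi)
        = 1 / (2 * Real.pi) by ring] at hmain
    refine hmain.congr' ?_
    filter_upwards [hmem] with ε hε
    have hε1 : 0 < ε := hε.1
    have hlogneg : Real.log ε < 0 := Real.log_neg hε.1 hε.2
    have hLpos : 0 < -Real.log ε := by linarith
    have hlogx : Real.log (c * ε ^ 2 * (-Real.log ε))
        = Real.log c + 2 * Real.log ε + Real.log (-Real.log ε) := by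
      rw [Real.log_mul (by positivity) (ne_of_gt hLpos), Real.log_mul (ne_of_gt hc)
        (by positivity), Real.log_pow]
      push_cast; ring
    unfold Qf
    rw [hlogx, show Real.log ε = -(-Real.log ε) from (neg_neg _).symm]
    set L := -Real.log ε with hLdef
    have hεne : ε ≠ 0 := ne_of_gt hε1
    have hLne : L ≠ 0 := ne_of_gt hLpos
    field_simp
    ring
  -- assemble
  have hG : Tendsto
      (fun ε : ℝ =>
        (Qf a ε (c * ε ^ 2 * (-Real.log ε)) - a) / (ε ^ 2 * (-Real.log ε)) / a
        - a * c / (4 * Real.pi)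
            * (Real.log (1 + c * ε ^ 2 * (-Real.log ε)) / (c * ε ^ 2 * (-Real.log ε)))
        - Real.log (1 + c * ε ^ 2 * (-Real.log ε)) / (4 * Real.pi)
            * ((Qf a ε (c * ε ^ 2 * (-Real.log ε)) - a) / (ε ^ 2 * (-Real.log ε))))
      (𝓝[>] (0:ℝ))
      (𝓝 (1 / (2 * Real.pi) / a - a * c / (4 * Real.pi) * 1
        - 0 / (4 * Real.pi) * (1 / (2 * Real.pi)))) :=
    ((hT1.div_const a).sub ((hratio.const_mul _))).sub ((hlog1x.div_const _).mul hT1)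
  rw [show (1 / (2 * Real.pi) / a - a * c / (4 * Real.pi) * 1
      - 0 / (4 * Real.pi) * (1 / (2 * Real.pi))) = a / (4 * Real.pi) * (2 / a ^ 2 - c) by
    field_simp [ha.ne']; ring] at hG
  refine hG.congr' ?_
  filter_upwards [hmem] with ε hε
  have hε1 : 0 < ε := hε.1
  have hlogneg : Real.log ε < 0 := Real.log_neg hε.1 hε.2
  have hLpos : 0 < -Real.log ε := by linarith
  have hεne : ε ≠ 0 := ne_of_gt hε1
  have hLne : -Real.log ε ≠ 0 := ne_of_gt hLpos
  have hane : a ≠ 0 := ne_of_gt ha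
  have hcne : c ≠ 0 := ne_of_gt hc
  unfold Pf Qf
  rw [show Real.log ε = -(-Real.log ε) from (neg_neg _).symm]
  set L := -Real.log ε with hLdef
  have hLne2 : L ≠ 0 := hLne
  field_simp
  ring

set_option maxHeartbeats 1600000 in
lemma eventually_main (a : ℝ) (ha : 0 < a) :
    ∀ᶠ ε in 𝓝[>] (0:ℝ),
      (∃ y, y ∈ SmallSet a ε) ∧
      (∀ u w, u ∈ SmallSet a ε → w ∈ SmallSet a ε → u = w) ∧
      (∃ lam₁, lamZ a ε < lam₁ ∧ EqE a ε lam₁ ∧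
        ∀ lam, 0 < lam → EqE a ε lam → lam = lam₁ ∨ lam ∈ SmallSet a ε) := by
  have hπ : (0:ℝ) < Real.pi := Real.pi_pos
  have hmem : Ioo (0:ℝ) (min 1 a) ∈ 𝓝[>] (0:ℝ) :=
    Ioo_mem_nhdsGT_of_mem (left_mem_Ico.mpr (by positivity))
  filter_upwards [hmem] with ε hε
  obtain ⟨hε0, hεlt⟩ := hε
  have hε1 : ε < 1 := lt_of_lt_of_le hεlt (min_le_left _ _)
  have hεa : ε < a := lt_of_lt_of_le hεlt (min_le_right _ _)
  have hεne : ε ≠ 0 := ne_of_gt hε0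
  have hane : a ≠ 0 := ne_of_gt ha
  have hε2 : 0 < ε ^ 2 := pow_pos hε0 2
  have hSpos : 0 < lamS a := lamS_pos a ha
  have hSZ : lamS a < lamZ a ε := lamS_lt_lamZ a ε ha hεne
  have hZpos : 0 < lamZ a ε := hSpos.trans hSZ
  have hSexp : lamS a < Real.exp (4 * Real.pi / a) := by unfold lamS; linarith
  have hexpZ : Real.exp (4 * Real.pi / a) < lamZ a ε := by
    unfold lamZ
    apply Real.exp_lt_exp.mpr
    have h1 : 0 < 4 * Real.pi * (a / ε ^ 2) := by positivity
    have e1 : 4 * Real.pi * (a / ε ^ 2 + 1 / a)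
        = 4 * Real.pi * (a / ε ^ 2) + 4 * Real.pi / a := by ring
    linarith
  -- the small test point A
  set A := Real.exp (-(8 * Real.pi * a) / ε ^ 2) with hAdef
  have hApos : 0 < A := Real.exp_pos _
  have hA1 : A ≤ Real.exp (-(8 * Real.pi * a)) := by
    apply Real.exp_le_exp.mpr
    have ht : 0 < 8 * Real.pi * a := by positivity
    have hε21 : ε ^ 2 ≤ 1 := by nlinarith
    have h1 : 8 * Real.pi * a ≤ 8 * Real.pi * a / ε ^ 2 := by
      rw [le_div_iff₀ hε2]; nlinarith
    have h2 : -(8 * Real.pi * a) / ε ^ 2 = -(8 * Real.pi * a / ε ^ 2) := by ring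
    linarith [h2.le, h2.ge]
  have hA2 : Real.exp (-(8 * Real.pi * a)) ≤ 2 * Real.pi / a := by
    have hadd := Real.add_one_le_exp (8 * Real.pi * a)
    have hepos := Real.exp_pos (8 * Real.pi * a)
    have hstep : a / (2 * Real.pi) ≤ Real.exp (8 * Real.pi * a) := by
      have h1 : a / (2 * Real.pi) ≤ a := by
        rw [div_le_iff₀ (by positivity)]; nlinarith [Real.pi_gt_three]
      have h2 : a ≤ 8 * Real.pi * a := by
        nlinarith [mul_nonneg ha.le (by linarith [Real.pi_gt_three] : (0:ℝ) ≤ 8 * Real.pi - 1)]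
      linarith
    rw [Real.exp_neg, inv_eq_one_div, div_le_div_iff₀ hepos ha]
    have := mul_le_mul_of_nonneg_left hstep (by positivity : (0:ℝ) ≤ 2 * Real.pi)
    have e2 : 2 * Real.pi * (a / (2 * Real.pi)) = a := by field_simp
    nlinarith
  have hA3 : A ≤ 2 * Real.pi / a := hA1.trans hA2
  have hS4 : 4 * Real.pi / a ≤ lamS a := by
    have := Real.add_one_le_exp (4 * Real.pi / a)
    unfold lamS; linarith
  have hAS : A < lamS a := by
    have h1 : 2 * Real.pi / a < 4 * Real.pi / a := by gcongr; linarith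
    linarith
  have hQA : Qf a ε A = 3 * a + ε ^ 2 / a := by
    rw [hAdef]; unfold Qf; rw [Real.log_exp]; field_simp; ring
  have hlogA : Real.log (1 + A) ≤ A := by
    have := Real.log_le_sub_one_of_pos (by linarith : (0:ℝ) < 1 + A)
    linarith
  have hPA : 1 / (2 * a) ≤ Pf a A := by
    unfold Pf
    have h1 : Real.log (1 + A) / (4 * Real.pi) ≤ A / (4 * Real.pi) := by gcongr
    have h2 : A / (4 * Real.pi) ≤ 2 * Real.pi / a / (4 * Real.pi) := by gcongr
    have h3 : 2 * Real.pi / a / (4 * Real.pi) = 1 / (2 * a) := by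
      field_simp; ring
    have e4 : 1 / a = 2 * (1 / (2 * a)) := by field_simp
    linarith
  have hhfA : (3:ℝ) / 2 ≤ Pf a A * Qf a ε A := by
    rw [hQA]
    have h1 : (0:ℝ) < 3 * a + ε ^ 2 / a := by positivity
    have h2 : 1 / (2 * a) * (3 * a) ≤ 1 / (2 * a) * (3 * a + ε ^ 2 / a) := by
      have : (0:ℝ) ≤ 1 / (2 * a) := by positivity
      nlinarith [div_nonneg (sq_nonneg ε) ha.le]
    have h3 : 1 / (2 * a) * (3 * a) = 3 / 2 := by field_simp
    have h4 : 1 / (2 * a) * (3 * a + ε ^ 2 / a) ≤ Pf a A * (3 * a + ε ^ 2 / a) :=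
      mul_le_mul_of_nonneg_right hPA h1.le
    linarith
  have hfS : Pf a (lamS a) * Qf a ε (lamS a) = 0 := by rw [Pf_zero a ha, zero_mul]
  have hcont : ContinuousOn (fun x => Pf a x * Qf a ε x) (Icc A (lamS a)) :=
    (hf_cont a ε).mono (fun x hx => lt_of_lt_of_le hApos hx.1)
  have h1mem : (1:ℝ) ∈ Icc (Pf a (lamS a) * Qf a ε (lamS a)) (Pf a A * Qf a ε A) := by
    rw [hfS]; exact ⟨by norm_num, by linarith⟩
  obtain ⟨y, hyIcc, hy1⟩ := intermediate_value_Icc' hAS.le hcont h1mem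
  simp only at hy1
  have hyA : A < y := by
    rcases eq_or_lt_of_le hyIcc.1 with h | h
    · exfalso; rw [← h] at hy1; linarith
    · exact h
  have hyS : y < lamS a := by
    rcases eq_or_lt_of_le hyIcc.2 with h | h
    · exfalso; rw [h] at hy1; rw [hfS] at hy1; norm_num at hy1
    · exact h
  have hypos : 0 < y := hApos.trans hyA
  have hySmall : y ∈ SmallSet a ε := by
    have hQy : 0 < Qf a ε y := Qf_pos a ε ha hεne hypos (hyS.trans hSZ)
    exact ⟨hypos, hyS.trans hSexp, (eq_iff a ε y hane (ne_of_gt hQy)).mpr hy1⟩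
  -- uniqueness in the small set
  have hmemchar : ∀ u, u ∈ SmallSet a ε → 0 < u ∧ u < lamS a ∧ Pf a u * Qf a ε u = 1 := by
    intro u hu
    obtain ⟨hu0, huexp, huE⟩ := hu
    have huZ : u < lamZ a ε := huexp.trans hexpZ
    have hQu : 0 < Qf a ε u := Qf_pos a ε ha hεne hu0 huZ
    have hhu : Pf a u * Qf a ε u = 1 := (eq_iff a ε u hane (ne_of_gt hQu)).mp huE
    refine ⟨hu0, ?_, hhu⟩
    by_contra hle
    push_neg at hle
    have hPu : Pf a u ≤ 0 := by
      rcases eq_or_lt_of_le hle with h | h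
      · rw [← h, Pf_zero a ha]
      · exact (Pf_neg a ha h).le
    nlinarith
  have huniq : ∀ u w, u ∈ SmallSet a ε → w ∈ SmallSet a ε → u = w := by
    intro u w hu hw
    obtain ⟨hu0, huS, hu1⟩ := hmemchar u hu
    obtain ⟨hw0, hwS, hw1⟩ := hmemchar w hw
    by_contra hne
    rcases lt_or_gt_of_ne hne with h | h
    · have := hf_anti a ε ha hεne hu0 h hwS
      rw [hu1, hw1] at this; exact lt_irrefl _ this
    · have := hf_anti a ε ha hεne hw0 h huS
      rw [hu1, hw1] at this; exact lt_irrefl _ this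
  -- the large test point C
  set C := Real.exp (8 * Real.pi * (a / ε ^ 2 + 1 / a)) with hCdef
  have hZC : lamZ a ε < C := by
    rw [hCdef]; unfold lamZ
    apply Real.exp_lt_exp.mpr
    have h1 : 0 < a / ε ^ 2 + 1 / a := by positivity
    have h2 := mul_pos hπ h1
    nlinarith
  have hQC : Qf a ε C = -(a + ε ^ 2 / a) := by
    rw [hCdef]; unfold Qf; rw [Real.log_exp]; field_simp; ring
  have hPC : Pf a C ≤ -(1 / a + 2 * a / ε ^ 2) := by
    have hCpos : 0 < C := Real.exp_pos _
    have hlogC : Real.log C = 8 * Real.pi * (a / ε ^ 2 + 1 / a) := by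
      rw [hCdef]; exact Real.log_exp _
    have h1 : Real.log C < Real.log (1 + C) := Real.log_lt_log hCpos (by linarith)
    unfold Pf
    have h2 : 8 * Real.pi * (a / ε ^ 2 + 1 / a) / (4 * Real.pi)
        = 2 * (a / ε ^ 2) + 2 / a := by field_simp; ring
    have h3 : Real.log C / (4 * Real.pi) ≤ Real.log (1 + C) / (4 * Real.pi) := by gcongr
    rw [hlogC] at h3
    rw [h2] at h3
    have e5 : 2 * (a / ε ^ 2) = 2 * a / ε ^ 2 := by ring
    have e6 : 2 / a = 2 * (1 / a) := by ring
    linarith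
  have hfC : (1:ℝ) ≤ Pf a C * Qf a ε C := by
    have hnP : 1 / a + 2 * a / ε ^ 2 ≤ -Pf a C := by linarith
    have hnQ : a ≤ -Qf a ε C := by
      rw [hQC]
      have : (0:ℝ) ≤ ε ^ 2 / a := by positivity
      linarith
    have hp1 : (0:ℝ) < 2 * a / ε ^ 2 := by positivity
    have hp2 : (0:ℝ) < 1 / a := by positivity
    have hmm : (2 * a / ε ^ 2) * a ≤ (-Pf a C) * (-Qf a ε C) :=
      mul_le_mul (by linarith) hnQ ha.le (by linarith)
    have hval : (2:ℝ) < 2 * a ^ 2 / ε ^ 2 := by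
      rw [lt_div_iff₀ hε2]; nlinarith
    have he : (2 * a / ε ^ 2) * a = 2 * a ^ 2 / ε ^ 2 := by ring
    nlinarith [neg_mul_neg (Pf a C) (Qf a ε C)]
  have hfZ : Pf a (lamZ a ε) * Qf a ε (lamZ a ε) = 0 := by
    rw [Qf_zero a ε ha hεne, mul_zero]
  have hcont2 : ContinuousOn (fun x => Pf a x * Qf a ε x) (Icc (lamZ a ε) C) :=
    (hf_cont a ε).mono (fun x hx => lt_of_lt_of_le hZpos hx.1)
  have h1mem2 : (1:ℝ) ∈ Icc (Pf a (lamZ a ε) * Qf a ε (lamZ a ε)) (Pf a C * Qf a ε C) := by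
    rw [hfZ]; exact ⟨by norm_num, hfC⟩
  obtain ⟨lam₁, hl1Icc, hl1⟩ := intermediate_value_Icc hZC.le hcont2 h1mem2
  simp only at hl1
  have hl1Z : lamZ a ε < lam₁ := by
    rcases eq_or_lt_of_le hl1Icc.1 with h | h
    · exfalso; rw [← h] at hl1; rw [hfZ] at hl1; norm_num at hl1
    · exact h
  have hl1pos : 0 < lam₁ := hZpos.trans hl1Z
  have hl1E : EqE a ε lam₁ := by
    have hQ : Qf a ε lam₁ < 0 := Qf_neg a ε ha hεne hl1Z
    exact (eq_iff a ε lam₁ hane (ne_of_lt hQ)).mpr hl1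
  -- classification of all solutions
  have hclass : ∀ lam, 0 < lam → EqE a ε lam → lam = lam₁ ∨ lam ∈ SmallSet a ε := by
    intro lam hlam0 hlamE
    have hQne : Qf a ε lam ≠ 0 := by
      intro hQ0
      have hlamZeq : lam = lamZ a ε := by
        by_contra hne
        rcases lt_or_gt_of_ne hne with h | h
        · have h2 := Qf_lt a hεne hlam0 h
          rw [hQ0, Qf_zero a ε ha hεne] at h2
          exact lt_irrefl _ h2
        · have h2 := Qf_lt a hεne hZpos h
          rw [hQ0, Qf_zero a ε ha hεne] at h2
          exact lt_irrefl _ h2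
      have hden : ε ^ 2 * Real.log lam / (4 * Real.pi) - a - ε ^ 2 / a = 0 := by
        have he : ε ^ 2 * Real.log lam / (4 * Real.pi) - a - ε ^ 2 / a = -Qf a ε lam := by
          unfold Qf; ring
        rw [he, hQ0, neg_zero]
      unfold EqE at hlamE
      rw [hden] at hlamE
      norm_num at hlamE
      have hloglam : Real.log lam = 4 * Real.pi * (a / ε ^ 2 + 1 / a) := by
        rw [hlamZeq]; unfold lamZ; exact Real.log_exp _
      have h2 : Real.log lam < Real.log (1 + lam) := Real.log_lt_log hlam0 (by linarith)
      have h3 : 4 * Real.pi / a < Real.log (1 + lam) := by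
        have h1 : 0 < 4 * Real.pi * (a / ε ^ 2) := by positivity
        have e1 : 4 * Real.pi * (a / ε ^ 2 + 1 / a)
            = 4 * Real.pi * (a / ε ^ 2) + 4 * Real.pi / a := by ring
        linarith
      have h4 : 1 / a < Real.log (1 + lam) / (4 * Real.pi) := by
        rw [lt_div_iff₀ (by positivity : (0:ℝ) < 4 * Real.pi)]
        have e2 : 4 * Real.pi / a = 1 / a * (4 * Real.pi) := by ring
        linarith
      rw [inv_eq_one_div] at hlamE
      linarith
    have hhlam : Pf a lam * Qf a ε lam = 1 := (eq_iff a ε lam hane hQne).mp hlamE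
    rcases lt_trichotomy lam (lamS a) with hS' | hS' | hS'
    · exact Or.inr ⟨hlam0, hS'.trans hSexp, hlamE⟩
    · exfalso
      rw [hS'] at hhlam
      rw [hfS] at hhlam
      norm_num at hhlam
    · rcases lt_trichotomy lam (lamZ a ε) with hZ' | hZ' | hZ'
      · exfalso
        have hP := Pf_neg a ha hS'
        have hQ := Qf_pos a ε ha hεne hlam0 hZ'
        nlinarith
      · exact absurd (hZ' ▸ Qf_zero a ε ha hεne) hQne
      · left
        by_contra hne
        rcases lt_or_gt_of_ne hne with h | h
        · have h2 := hf_mono a ε ha hεne hZ' h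
          rw [hhlam, hl1] at h2; exact lt_irrefl _ h2
        · have h2 := hf_mono a ε ha hεne hl1Z h
          rw [hl1, hhlam] at h2; exact lt_irrefl _ h2
  exact ⟨⟨y, hySmall⟩, huniq, lam₁, hl1Z, hl1E, hclass⟩

lemma tendsto_eL : Tendsto (fun ε : ℝ => ε ^ 2 * (-Real.log ε)) (𝓝[>] (0:ℝ)) (𝓝 0) := by
  have hε0 : Tendsto (fun ε : ℝ => ε) (𝓝[>] (0:ℝ)) (𝓝 0) :=
    tendsto_id.mono_left nhdsWithin_le_nhds
  have hεlog : Tendsto (fun ε : ℝ => Real.log ε * ε) (𝓝[>] (0:ℝ)) (𝓝 0) := by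
    have := tendsto_log_mul_rpow_nhdsGT_zero one_pos
    simpa using this
  have h := hε0.mul hεlog.neg
  rw [show (0:ℝ) * -0 = 0 by ring] at h
  exact h.congr fun ε => by ring

set_option maxHeartbeats 1600000 in
lemma eventually_asymp (a δ : ℝ) (ha : 0 < a) (hδ : 0 < δ) (hδ2 : δ < 2 / a ^ 2) :
    ∀ᶠ ε in 𝓝[>] (0:ℝ), ∀ y ∈ SmallSet a ε,
      abs (y - 2 / a ^ 2 * ε ^ 2 * abs (Real.log ε)) ≤ δ * (ε ^ 2 * abs (Real.log ε)) := by
  have hπ : (0:ℝ) < Real.pi := Real.pi_pos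
  have hane : a ≠ 0 := ne_of_gt ha
  have h2a : (0:ℝ) < 2 / a ^ 2 := by positivity
  set cm := 2 / a ^ 2 - δ with hcm
  set cp := 2 / a ^ 2 + δ with hcp
  have hcm0 : 0 < cm := by rw [hcm]; linarith
  have hcp0 : 0 < cp := by rw [hcp]; linarith
  have hTm := tendsto_h a cm ha hcm0
  have hTp := tendsto_h a cp ha hcp0
  have hlimm : 0 < a / (4 * Real.pi) * (2 / a ^ 2 - cm) := by
    have e : 2 / a ^ 2 - cm = δ := by rw [hcm]; ring
    rw [e]; positivity
  have hlimp : a / (4 * Real.pi) * (2 / a ^ 2 - cp) < 0 := by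
    have e : 2 / a ^ 2 - cp = -δ := by rw [hcp]; ring
    rw [e]
    exact mul_neg_of_pos_of_neg (by positivity) (by linarith)
  have hevm := hTm.eventually (eventually_gt_nhds hlimm)
  have hevp := hTp.eventually (eventually_lt_nhds hlimp)
  have hxp0 : Tendsto (fun ε : ℝ => cp * ε ^ 2 * (-Real.log ε)) (𝓝[>] (0:ℝ)) (𝓝 0) := by
    have h := tendsto_eL.const_mul cp
    rw [mul_zero] at h
    exact h.congr fun ε => by ring
  have hxpS := hxp0.eventually (eventually_lt_nhds (lamS_pos a ha))
  have hmem : Ioo (0:ℝ) 1 ∈ 𝓝[>] (0:ℝ) := Ioo_mem_nhdsGT_of_mem (left_mem_Ico.mpr one_pos)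
  filter_upwards [hevm, hevp, hxpS, hmem] with ε hGm hGp hxpS' hε
  obtain ⟨hε0, hε1⟩ := hε
  have hεne : ε ≠ 0 := ne_of_gt hε0
  have hlog : Real.log ε < 0 := Real.log_neg hε0 hε1
  have hL : 0 < -Real.log ε := by linarith
  have hεL : 0 < ε ^ 2 * (-Real.log ε) := mul_pos (pow_pos hε0 2) hL
  have hεLne : ε ^ 2 * (-Real.log ε) ≠ 0 := ne_of_gt hεL
  have hm1 : 1 < Pf a (cm * ε ^ 2 * (-Real.log ε)) * Qf a ε (cm * ε ^ 2 * (-Real.log ε)) := by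
    have h2 := mul_pos hGm hεL
    rw [div_mul_cancel₀ _ hεLne] at h2
    linarith
  have hp1 : Pf a (cp * ε ^ 2 * (-Real.log ε)) * Qf a ε (cp * ε ^ 2 * (-Real.log ε)) < 1 := by
    have h2 := mul_neg_of_neg_of_pos hGp hεL
    rw [div_mul_cancel₀ _ hεLne] at h2
    linarith
  have hSZ : lamS a < lamZ a ε := lamS_lt_lamZ a ε ha hεne
  have hSpos : 0 < lamS a := lamS_pos a ha
  have hSexp : lamS a < Real.exp (4 * Real.pi / a) := by unfold lamS; linarith
  have hexpZ : Real.exp (4 * Real.pi / a) < lamZ a ε := by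
    unfold lamZ
    apply Real.exp_lt_exp.mpr
    have h1 : 0 < 4 * Real.pi * (a / ε ^ 2) := by positivity
    have e1 : 4 * Real.pi * (a / ε ^ 2 + 1 / a)
        = 4 * Real.pi * (a / ε ^ 2) + 4 * Real.pi / a := by ring
    linarith
  intro y hy
  obtain ⟨hy0, hyexp, hyE⟩ := hy
  have hQy : 0 < Qf a ε y := Qf_pos a ε ha hεne hy0 (hyexp.trans hexpZ)
  have hy1 : Pf a y * Qf a ε y = 1 := (eq_iff a ε y hane (ne_of_gt hQy)).mp hyE
  have hyS : y < lamS a := by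
    by_contra hle
    push_neg at hle
    have hPy : Pf a y ≤ 0 := by
      rcases eq_or_lt_of_le hle with h | h
      · rw [← h, Pf_zero a ha]
      · exact (Pf_neg a ha h).le
    nlinarith
  have hxm_pos : 0 < cm * ε ^ 2 * (-Real.log ε) := by positivity
  have hxmxp : cm * ε ^ 2 * (-Real.log ε) < cp * ε ^ 2 * (-Real.log ε) := by
    have hc : cm < cp := by rw [hcm, hcp]; linarith
    have := mul_lt_mul_of_pos_right hc hεL
    calc cm * ε ^ 2 * (-Real.log ε) = cm * (ε ^ 2 * (-Real.log ε)) := by ring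
    _ < cp * (ε ^ 2 * (-Real.log ε)) := this
    _ = cp * ε ^ 2 * (-Real.log ε) := by ring
  have h5 : cm * ε ^ 2 * (-Real.log ε) < y := by
    by_contra hle
    push_neg at hle
    rcases eq_or_lt_of_le hle with h | h
    · rw [← h] at hm1
      rw [hy1] at hm1
      exact lt_irrefl _ hm1
    · have h2 := hf_anti a ε ha hεne hy0 h (hxmxp.trans hxpS')
      rw [hy1] at h2
      linarith
  have h6 : y < cp * ε ^ 2 * (-Real.log ε) := by
    by_contra hle
    push_neg at hle
    rcases eq_or_lt_of_le hle with h | h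
    · rw [h, hy1] at hp1
      exact lt_irrefl _ hp1
    · have h2 := hf_anti a ε ha hεne (hxm_pos.trans hxmxp) h hyS
      rw [hy1] at h2
      linarith
  have habs : |Real.log ε| = -Real.log ε := abs_of_neg hlog
  rw [habs]
  have e1 : cm * ε ^ 2 * (-Real.log ε)
      = 2 / a ^ 2 * ε ^ 2 * (-Real.log ε) - δ * (ε ^ 2 * (-Real.log ε)) := by
    rw [hcm]; ring
  have e2 : cp * ε ^ 2 * (-Real.log ε)
      = 2 / a ^ 2 * ε ^ 2 * (-Real.log ε) + δ * (ε ^ 2 * (-Real.log ε)) := by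
    rw [hcp]; ring
  rw [e1] at h5
  rw [e2] at h6
  rw [abs_le]
  refine ⟨by linarith, by linarith⟩

end TwoEigAux

/-- d = 2, θ₀ = 0, c = 0: for small ε the equation
`ln(1+λ)/(4π) = 1/a + 1/(ε²·ln λ/(4π) − a − ε²/a)` (λ > 0) has exactly two
solutions: one in `(exp(4π(a/ε² + 1/a)), ∞)`, the other `λ_ε` in
`(0, exp(4π/a))`, with `λ_ε = (2/a²)ε²|ln ε| + o(ε²|ln ε|)` as ε → 0. -/
theorem two_eigenvalues_d2_offdiagonal (a : ℝ)
    (ha : a = 2 * Real.pi / (Real.log 2 - Real.eulerMascheroniConstant)) :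
    ∃ ε₀ > (0 : ℝ), ∃ Λ : ℝ → ℝ,
      (∀ ε : ℝ, 0 < ε → ε < ε₀ →
        ∃ lam₁ : ℝ,
          Real.exp (4 * Real.pi * (a / ε ^ 2 + 1 / a)) < lam₁ ∧
          Real.log (1 + lam₁) / (4 * Real.pi) =
            1 / a + 1 / (ε ^ 2 * Real.log lam₁ / (4 * Real.pi) - a - ε ^ 2 / a) ∧
          0 < Λ ε ∧ Λ ε < Real.exp (4 * Real.pi / a) ∧
          Real.log (1 + Λ ε) / (4 * Real.pi) =
            1 / a + 1 / (ε ^ 2 * Real.log (Λ ε) / (4 * Real.pi) - a - ε ^ 2 / a) ∧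
          lam₁ ≠ Λ ε ∧
          (∀ lam : ℝ, 0 < lam →
            Real.log (1 + lam) / (4 * Real.pi) =
              1 / a + 1 / (ε ^ 2 * Real.log lam / (4 * Real.pi) - a - ε ^ 2 / a) →
            lam = lam₁ ∨ lam = Λ ε)) ∧
      (∀ δ > (0 : ℝ), ∃ ε₁ > (0 : ℝ), ∀ ε : ℝ, 0 < ε → ε < ε₁ → ε < ε₀ →
        abs (Λ ε - 2 / a ^ 2 * ε ^ 2 * |Real.log ε|) ≤ δ * (ε ^ 2 * |Real.log ε|)) := by
  have ha0 : 0 < a := a_pos a ha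
  have hane : a ≠ 0 := ne_of_gt ha0
  obtain ⟨ε₀, hε₀mem, hε₀sub⟩ :=
    mem_nhdsGT_iff_exists_Ioo_subset.mp (eventually_main a ha0)
  refine ⟨ε₀, hε₀mem, Lam a, ?_, ?_⟩
  · intro ε hε0 hεlt
    have hMain := hε₀sub ⟨hε0, hεlt⟩
    obtain ⟨hEx, hUniq, lam₁, hl1Z, hl1E, hclass⟩ := hMain
    have hΛmem : Lam a ε ∈ SmallSet a ε := by
      rw [Lam, dif_pos hEx]
      exact hEx.choose_spec
    have hεne : ε ≠ 0 := ne_of_gt hε0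
    have hexpZle : Real.exp (4 * Real.pi / a) ≤ lamZ a ε := by
      unfold lamZ
      apply Real.exp_le_exp.mpr
      have hπ : (0:ℝ) < Real.pi := Real.pi_pos
      have h1 : 0 < 4 * Real.pi * (a / ε ^ 2) := by positivity
      have e1 : 4 * Real.pi * (a / ε ^ 2 + 1 / a)
          = 4 * Real.pi * (a / ε ^ 2) + 4 * Real.pi / a := by ring
      linarith
    have hne : lam₁ ≠ Lam a ε := by
      have h2 : Lam a ε < lam₁ :=
        lt_of_lt_of_le (lt_of_lt_of_le hΛmem.2.1 hexpZle) hl1Z.le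
      exact ne_of_gt h2
    refine ⟨lam₁, hl1Z, hl1E, hΛmem.1, hΛmem.2.1, hΛmem.2.2, hne, ?_⟩
    intro lam hlam0 hlamE
    rcases hclass lam hlam0 hlamE with h | h
    · exact Or.inl h
    · exact Or.inr (hUniq lam (Lam a ε) h hΛmem)
  · intro δ hδ
    have hδ'0 : 0 < min δ (1 / a ^ 2) := lt_min hδ (by positivity)
    have hδ'2 : min δ (1 / a ^ 2) < 2 / a ^ 2 := by
      have h1 : (1:ℝ) / a ^ 2 < 2 / a ^ 2 := by gcongr <;> norm_num
      exact lt_of_le_of_lt (min_le_right _ _) h1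
    obtain ⟨ε₁, hε₁mem, hε₁sub⟩ := mem_nhdsGT_iff_exists_Ioo_subset.mp
      (eventually_asymp a (min δ (1 / a ^ 2)) ha0 hδ'0 hδ'2)
    refine ⟨ε₁, hε₁mem, ?_⟩
    intro ε hε0 hεε₁ hεε₀
    have hMain := hε₀sub ⟨hε0, hεε₀⟩
    have hEx := hMain.1
    have hΛmem : Lam a ε ∈ SmallSet a ε := by
      rw [Lam, dif_pos hEx]
      exact hEx.choose_spec
    have hasym := hε₁sub ⟨hε0, hεε₁⟩ (Lam a ε) hΛmem
    have hnn : 0 ≤ ε ^ 2 * |Real.log ε| := by positivity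
    have hle : min δ (1 / a ^ 2) * (ε ^ 2 * |Real.log ε|) ≤ δ * (ε ^ 2 * |Real.log ε|) :=
      mul_le_mul_of_nonneg_right (min_le_left _ _) hnn
    exact le_trans hasym hle
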